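/- Let G be a group with unitary representations U_a on H_a and U_s on H_s, let ρ_a be a state on H_a, and let {Π_k} be a projective measurement on H_s. The following are equivalent: (i) there exists a projective measurement {Π̃_k} on H_s⊗H_a with every Π̃_k commuting with U_s(g)⊗U_a(g) for all g ∈ G, such that Tr(Π̃_k(ρ_s⊗ρ_a)) = Tr(Π_k ρ_s) for all states ρ_s and all k; (ii) there exists a projective measurement {Q_k} on H_s⊗H_a such that for all g ∈ G, all states ρ_s, and all k, Tr(Q_k(ρ_s ⊗ U_a(g)ρ_a U_a(g)†)) = Tr(U_s(g)Π_k U_s(g)† ρ_s). -/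

import Mathlib

open Matrix
open scoped ComplexOrder Kronecker

set_option linter.unusedSectionVars false

namespace SymSimAux

variable {n : Type*} [Fintype n] [DecidableEq n]

open scoped MatrixOrder in
lemma exists_psd_sqrt {A : Matrix n n ℂ} (hA : A.PosSemidef) :
    ∃ C : Matrix n n ℂ, C.PosSemidef ∧ C * C = A :=
  ⟨CFC.sqrt A, (CFC.sqrt_nonneg A).posSemidef, CFC.sqrt_mul_sqrt_self A hA.nonneg⟩

noncomputable def _root_.Matrix.PosSemidef.sqrt {A : Matrix n n ℂ} (hA : A.PosSemidef) :
    Matrix n n ℂ :=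
  Classical.choose (exists_psd_sqrt hA)

lemma _root_.Matrix.PosSemidef.posSemidef_sqrt {A : Matrix n n ℂ} (hA : A.PosSemidef) :
    hA.sqrt.PosSemidef :=
  (Classical.choose_spec (exists_psd_sqrt hA)).1

lemma _root_.Matrix.PosSemidef.sqrt_mul_self {A : Matrix n n ℂ} (hA : A.PosSemidef) :
    hA.sqrt * hA.sqrt = A :=
  (Classical.choose_spec (exists_psd_sqrt hA)).2

lemma psd_diag_nonneg {A : Matrix n n ℂ} (hA : A.PosSemidef) (i : n) : 0 ≤ A i i := by
  exact hA.diag_nonneg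

lemma psd_trace_nonneg {A : Matrix n n ℂ} (hA : A.PosSemidef) : 0 ≤ A.trace :=
  Finset.sum_nonneg fun i _ => psd_diag_nonneg hA i

lemma eq_zero_of_trace_conjTranspose_mul_self {m p : Type*} [Fintype m] [Fintype p]
    (A : Matrix m p ℂ) (h : (Aᴴ * A).trace = 0) : A = 0 := by
  have hdiag : ∀ j, (Aᴴ * A) j j = dotProduct (star fun i => A i j) (fun i => A i j) := by
    intro j
    simp [Matrix.mul_apply, Matrix.conjTranspose_apply, dotProduct]
  have hnn : ∀ j ∈ Finset.univ, (0:ℂ) ≤ (Aᴴ * A) j j := by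
    intro j _
    rw [hdiag j]
    exact dotProduct_star_self_nonneg _
  have hz := (Finset.sum_eq_zero_iff_of_nonneg hnn).mp h
  ext i j
  have := (dotProduct_star_self_eq_zero).mp <| (hdiag j) ▸ hz j (Finset.mem_univ j)
  exact congrFun this i

lemma psd_trace_eq_zero {A : Matrix n n ℂ} (hA : A.PosSemidef) (h : A.trace = 0) : A = 0 := by
  have hC : hA.sqrt ᴴ = hA.sqrt := hA.posSemidef_sqrt.isHermitian
  have h1 : hA.sqrtᴴ * hA.sqrt = A := by rw [hC, hA.sqrt_mul_self]
  have := eq_zero_of_trace_conjTranspose_mul_self hA.sqrt (by rw [h1, h])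
  rw [← hA.sqrt_mul_self, this, mul_zero]

lemma mul_eq_zero_of_trace_mul_eq_zero {A B : Matrix n n ℂ} (hA : A.PosSemidef)
    (hB : B.PosSemidef) (h : (A * B).trace = 0) : A * B = 0 := by
  set C := hA.sqrt with hCdef
  set D := hB.sqrt with hDdef
  have hCh : Cᴴ = C := hA.posSemidef_sqrt.isHermitian
  have hDh : Dᴴ = D := hB.posSemidef_sqrt.isHermitian
  have hCC : C * C = A := hA.sqrt_mul_self
  have hDD : D * D = B := hB.sqrt_mul_self
  have h0 : ((D * C)ᴴ * (D * C)).trace = 0 := by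
    rw [conjTranspose_mul, hCh, hDh]
    have e1 : (C * D) * (D * C) = C * (B * C) := by rw [← hDD]; noncomm_ring
    have e2 : (B * C) * C = B * A := by rw [← hCC]; noncomm_ring
    rw [e1, Matrix.trace_mul_comm, e2, Matrix.trace_mul_comm, h]
  have hDC : D * C = 0 := eq_zero_of_trace_conjTranspose_mul_self _ h0
  have hCD : C * D = 0 := by
    have := congrArg conjTranspose hDC
    rwa [conjTranspose_mul, hCh, hDh, conjTranspose_zero] at this
  calc A * B = C * (C * D) * D := by rw [← hCC, ← hDD]; noncomm_ring
    _ = 0 := by rw [hCD, mul_zero, zero_mul]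

lemma mul_psd_eq_zero {W B : Matrix n n ℂ} (hW : W.PosSemidef)
    (h : B * W * Bᴴ = 0) : B * W = 0 := by
  set C := hW.sqrt with hCdef
  have hCh : Cᴴ = C := hW.posSemidef_sqrt.isHermitian
  have hCC : C * C = W := hW.sqrt_mul_self
  have h1 : (B * C) * (B * C)ᴴ = 0 := by
    rw [conjTranspose_mul, hCh]
    calc B * C * (C * Bᴴ) = B * (C * C) * Bᴴ := by noncomm_ring
      _ = 0 := by rw [hCC, h]
  have hBC : B * C = 0 := Matrix.self_mul_conjTranspose_eq_zero.mp h1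
  calc B * W = (B * C) * C := by rw [← hCC]; noncomm_ring
    _ = 0 := by rw [hBC, zero_mul]

lemma psd_sum_eq_zero {ι : Type*} [Fintype ι] {f : ι → Matrix n n ℂ}
    (hf : ∀ i, (f i).PosSemidef) (h : ∑ i, f i = 0) (i : ι) : f i = 0 := by
  have ht : ∑ j, (f j).trace = 0 := by
    rw [← Matrix.trace_sum, h, Matrix.trace_zero]
  have := (Finset.sum_eq_zero_iff_of_nonneg
    (fun j _ => psd_trace_nonneg (hf j))).mp ht i (Finset.mem_univ i)
  exact psd_trace_eq_zero (hf i) this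

lemma psd_sum {ι : Type*} (t : Finset ι) (f : ι → Matrix n n ℂ)
    (h : ∀ i ∈ t, (f i).PosSemidef) : (∑ i ∈ t, f i).PosSemidef :=
  Finset.sum_induction f _ (fun _ _ ha hb => ha.add hb) Matrix.PosSemidef.zero h

lemma psd_smul {A : Matrix n n ℂ} (hA : A.PosSemidef) {c : ℂ} (hc : 0 ≤ c) :
    (c • A).PosSemidef := by
  have hcr : (starRingEnd ℂ) c = c := by
    rw [Complex.conj_eq_iff_im]
    exact ((Complex.le_def).mp hc).2.symm
  constructor
  · show (c • A)ᴴ = c • A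
    rw [Matrix.conjTranspose_smul, hA.1]
    congr 1
  · exact (hA.smul hc).2

lemma conjTranspose_kron {m p q r : Type*} (A : Matrix m p ℂ) (B : Matrix q r ℂ) :
    (A ⊗ₖ B)ᴴ = Aᴴ ⊗ₖ Bᴴ := by
  ext ⟨i, j⟩ ⟨k, l⟩
  simp [Matrix.conjTranspose_apply, Matrix.kroneckerMap_apply, star_mul']

lemma kron_psd {m q : Type*} [Fintype m] [Fintype q] [DecidableEq m] [DecidableEq q] {A : Matrix m m ℂ} {B : Matrix q q ℂ}
    (hA : A.PosSemidef) (hB : B.PosSemidef) : (A ⊗ₖ B).PosSemidef := by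
  have hCh : hA.sqrtᴴ = hA.sqrt := hA.posSemidef_sqrt.isHermitian
  have hDh : hB.sqrtᴴ = hB.sqrt := hB.posSemidef_sqrt.isHermitian
  have := Matrix.posSemidef_conjTranspose_mul_self (hA.sqrt ⊗ₖ hB.sqrt)
  rwa [conjTranspose_kron, hCh, hDh, ← Matrix.mul_kronecker_mul,
    hA.sqrt_mul_self, hB.sqrt_mul_self] at this

lemma sum_kron {ι m q : Type*} (t : Finset ι) (f : ι → Matrix m m ℂ) (B : Matrix q q ℂ) :
    (∑ l ∈ t, f l) ⊗ₖ B = ∑ l ∈ t, (f l ⊗ₖ B) := by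
  ext ⟨i, j⟩ ⟨k, l⟩
  simp [Matrix.kroneckerMap_apply, Matrix.sum_apply, Finset.sum_mul]

/-- projection onto the range of a Hermitian matrix -/
lemma exists_range_proj {T : Matrix n n ℂ} (hT : T.IsHermitian) :
    ∃ Pr X : Matrix n n ℂ, Pr.IsHermitian ∧ Pr * Pr = Pr ∧ Pr * T = T ∧ Pr = T * X := by
  set V : Matrix n n ℂ := (hT.eigenvectorUnitary : Matrix n n ℂ) with hV
  have hVV : Vᴴ * V = 1 := by
    rw [← Matrix.star_eq_conjTranspose]
    exact Matrix.UnitaryGroup.star_mul_self _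
  set e : n → ℂ := RCLike.ofReal ∘ hT.eigenvalues with he
  set d : n → ℂ := fun i => if hT.eigenvalues i = 0 then 0 else 1 with hd
  set d' : n → ℂ := fun i => if hT.eigenvalues i = 0 then 0 else (e i)⁻¹ with hd'
  have hspec : T = V * Matrix.diagonal e * Vᴴ := by
    rw [← Matrix.star_eq_conjTranspose]
    exact hT.spectral_theorem
  have collapse : ∀ D1 D2 : n → ℂ,
      (V * Matrix.diagonal D1 * Vᴴ) * (V * Matrix.diagonal D2 * Vᴴ)
        = V * Matrix.diagonal (D1 * D2) * Vᴴ := by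
    intro D1 D2
    have h1 : (V * Matrix.diagonal D1 * Vᴴ) * (V * Matrix.diagonal D2 * Vᴴ)
        = V * Matrix.diagonal D1 * (Vᴴ * V) * (Matrix.diagonal D2 * Vᴴ) := by noncomm_ring
    have h2 : Matrix.diagonal D1 * Matrix.diagonal D2 = Matrix.diagonal (D1 * D2) :=
      Matrix.diagonal_mul_diagonal _ _
    rw [h1, hVV, Matrix.mul_one, ← h2]
    noncomm_ring
  refine ⟨V * Matrix.diagonal d * Vᴴ, V * Matrix.diagonal d' * Vᴴ, ?_, ?_, ?_, ?_⟩
  · show (V * Matrix.diagonal d * Vᴴ)ᴴ = V * Matrix.diagonal d * Vᴴ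
    have hsd : star d = d := by
      funext i; by_cases h : hT.eigenvalues i = 0 <;> simp [hd, h]
    rw [Matrix.conjTranspose_mul, Matrix.conjTranspose_mul, Matrix.conjTranspose_conjTranspose,
      Matrix.diagonal_conjTranspose, hsd]
    noncomm_ring
  · rw [collapse]
    have : d * d = d := by funext i; by_cases h : hT.eigenvalues i = 0 <;> simp [hd, h]
    rw [this]
  · rw [hspec, collapse]
    have : d * e = e := by
      funext i; by_cases h : hT.eigenvalues i = 0 <;> simp [hd, he, h]
    rw [this]
  · rw [hspec, collapse]
    have : e * d' = d := by
      funext i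
      by_cases h : hT.eigenvalues i = 0
      · simp [hd', hd, he, h]
      · have hne : e i ≠ 0 := by
          simp only [he, Function.comp_apply, ne_eq, RCLike.ofReal_eq_zero]
          exact h
        simp [hd', hd, h, Pi.mul_apply, mul_inv_cancel₀ hne]
    rw [this]

end SymSimAux

open SymSimAux

/-- Duality lemma: symmetric simulation of a projective measurement from a
resource state is equivalent to covariant programming of its group orbit.
In direction (i) we allow a POVM (as averaging a projective measurement over
the group yields in general only a POVM). -/
theorem symmetric_simulation_iff_covariant_programming
    {G : Type*} [Group G] [Fintype G]
    {s a κ : Type*} [Fintype s] [DecidableEq s] [Fintype a] [DecidableEq a] [Fintype κ]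
    (Us : G →* Matrix.unitaryGroup s ℂ) (Ua : G →* Matrix.unitaryGroup a ℂ)
    (ρa : Matrix a a ℂ) (hρa : ρa.PosSemidef) (hρatr : ρa.trace = 1)
    (P : κ → Matrix s s ℂ)
    (hherm : ∀ k, (P k).IsHermitian) (hidem : ∀ k, P k * P k = P k)
    (horth : ∀ k l, k ≠ l → P k * P l = 0) (hsum : ∑ k, P k = 1) :
    -- (i) a symmetric POVM simulating {P k} from the resource ρa
    (∃ E : κ → Matrix (s × a) (s × a) ℂ,
      (∀ k, (E k).PosSemidef) ∧ (∑ k, E k = 1) ∧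
      (∀ k (g : G), E k * ((Us g : Matrix s s ℂ) ⊗ₖ (Ua g : Matrix a a ℂ)) =
        ((Us g : Matrix s s ℂ) ⊗ₖ (Ua g : Matrix a a ℂ)) * E k) ∧
      (∀ k, ∀ ρs : Matrix s s ℂ, ρs.PosSemidef → ρs.trace = 1 →
        (E k * (ρs ⊗ₖ ρa)).trace = (P k * ρs).trace))
    ↔
    -- (ii) a projective measurement covariantly programming the whole orbit
    (∃ Q : κ → Matrix (s × a) (s × a) ℂ,
      (∀ k, (Q k).IsHermitian) ∧ (∀ k, Q k * Q k = Q k) ∧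
      (∀ k l, k ≠ l → Q k * Q l = 0) ∧ (∑ k, Q k = 1) ∧
      (∀ (g : G) (k : κ), ∀ ρs : Matrix s s ℂ, ρs.PosSemidef → ρs.trace = 1 →
        (Q k * (ρs ⊗ₖ
          ((Ua g : Matrix a a ℂ) * ρa * (Ua g : Matrix a a ℂ)ᴴ))).trace =
        ((Us g : Matrix s s ℂ) * P k * (Us g : Matrix s s ℂ)ᴴ * ρs).trace)) := by
  classical
  set u : G → Matrix (s × a) (s × a) ℂ :=
    fun g => (Us g : Matrix s s ℂ) ⊗ₖ (Ua g : Matrix a a ℂ) with hu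
  have hu_mul : ∀ g h : G, u g * u h = u (g * h) := by
    intro g h
    simp only [hu]
    rw [_root_.map_mul Us, _root_.map_mul Ua, Matrix.UnitaryGroup.mul_val,
      Matrix.UnitaryGroup.mul_val, ← Matrix.mul_kronecker_mul]
  have hu_one : u 1 = 1 := by
    simp only [hu]
    rw [_root_.map_one Us, _root_.map_one Ua, Matrix.UnitaryGroup.one_val,
      Matrix.UnitaryGroup.one_val, Matrix.one_kronecker_one]
  have hu_star : ∀ g : G, (u g)ᴴ = u g⁻¹ := by
    intro g
    have hsg : ((Us g : Matrix s s ℂ))ᴴ = (Us g⁻¹ : Matrix s s ℂ) := by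
      rw [_root_.map_inv, Matrix.UnitaryGroup.inv_val, Matrix.star_eq_conjTranspose]
    have hag : ((Ua g : Matrix a a ℂ))ᴴ = (Ua g⁻¹ : Matrix a a ℂ) := by
      rw [_root_.map_inv, Matrix.UnitaryGroup.inv_val, Matrix.star_eq_conjTranspose]
    simp only [hu]
    rw [conjTranspose_kron, hsg, hag]
  have hu_inv : ∀ g : G, (u g)ᴴ * u g = 1 := by
    intro g; rw [hu_star, hu_mul, inv_mul_cancel, hu_one]
  have hu_inv' : ∀ g : G, u g * (u g)ᴴ = 1 := by
    intro g; rw [hu_star, hu_mul, mul_inv_cancel, hu_one]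
  have hUs1 : ∀ g : G, ((Us g : Matrix s s ℂ))ᴴ * (Us g : Matrix s s ℂ) = 1 := by
    intro g; rw [← Matrix.star_eq_conjTranspose]; exact Matrix.UnitaryGroup.star_mul_self _
  have hUs2 : ∀ g : G, (Us g : Matrix s s ℂ) * ((Us g : Matrix s s ℂ))ᴴ = 1 := by
    intro g; rw [← Matrix.star_eq_conjTranspose]; exact Matrix.mem_unitaryGroup_iff.mp (Us g).2
  have hUa1 : ∀ g : G, ((Ua g : Matrix a a ℂ))ᴴ * (Ua g : Matrix a a ℂ) = 1 := by
    intro g; rw [← Matrix.star_eq_conjTranspose]; exact Matrix.UnitaryGroup.star_mul_self _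
  constructor
  · -- (i) → (ii)
    rintro ⟨E, hpos, hsumE, hcomm, htr⟩
    rcases isEmpty_or_nonempty κ with hκ | hκ
    · -- κ is empty, hence s is empty and everything is trivial
      have hse : IsEmpty s := by
        by_contra hs
        rw [not_isEmpty_iff] at hs
        obtain ⟨i⟩ := hs
        have h0 : (∑ k, P k) = (0 : Matrix s s ℂ) := by
          rw [Finset.univ_eq_empty, Finset.sum_empty]
        rw [hsum] at h0
        have h1 := congrFun (congrFun h0 i) i
        simp at h1
      refine ⟨fun _ => 0, fun k => isEmptyElim k, fun k => isEmptyElim k,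
        fun k => isEmptyElim k, ?_, fun g k => isEmptyElim k⟩
      rw [Finset.univ_eq_empty, Finset.sum_empty]
      ext ⟨i, j⟩ ⟨i', j'⟩
      exact hse.elim i
    · -- main construction
      have hPpsd : ∀ k, (P k).PosSemidef := by
        intro k
        have h1 : P k = (P k)ᴴ * P k := by rw [hherm k, hidem k]
        rw [h1]; exact Matrix.posSemidef_conjTranspose_mul_self _
      have hEherm : ∀ k, (E k)ᴴ = E k := fun k => (hpos k).isHermitian
      have key0 : ∀ l k, E l * (P k ⊗ₖ ρa) = if l = k then P k ⊗ₖ ρa else 0 := by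
        intro l k
        by_cases hk : P k = 0
        · simp [hk, Matrix.zero_kronecker]
        · have htrk0 : 0 ≤ (P k).trace := psd_trace_nonneg (hPpsd k)
          have htrkne : (P k).trace ≠ 0 := fun h => hk (psd_trace_eq_zero (hPpsd k) h)
          have hinv : 0 ≤ ((P k).trace)⁻¹ := by
            have him : (P k).trace.im = 0 := ((Complex.le_def).mp htrk0).2.symm
            have hre : 0 ≤ (P k).trace.re := by
              have := ((Complex.le_def).mp htrk0).1
              simpa using this
            have hrepr : (P k).trace = (((P k).trace.re : ℝ) : ℂ) := by
              exact (Complex.ext_iff.mpr ⟨rfl, by simp [him]⟩)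
            rw [hrepr, ← Complex.ofReal_inv]
            exact Complex.zero_le_real.mpr (by positivity)
          set c0 : ℂ := ((P k).trace)⁻¹ with hc0
          have hρs : (c0 • P k).PosSemidef := psd_smul (hPpsd k) hinv
          have hρstr : (c0 • P k).trace = 1 := by
            rw [Matrix.trace_smul, smul_eq_mul, hc0, inv_mul_cancel₀ htrkne]
          have h1 := htr l (c0 • P k) hρs hρstr
          rw [Matrix.smul_kronecker, Matrix.mul_smul, Matrix.trace_smul,
            Matrix.mul_smul, Matrix.trace_smul, smul_eq_mul, smul_eq_mul] at h1
          have h2 : (E l * (P k ⊗ₖ ρa)).trace = (P l * P k).trace :=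
            mul_left_cancel₀ (inv_ne_zero htrkne) h1
          by_cases hlk : l = k
          · subst hlk
            rw [if_pos rfl]
            have hF : ((1 : Matrix (s × a) (s × a) ℂ) - E l).PosSemidef := by
              have hsub : (1 : Matrix (s × a) (s × a) ℂ) - E l
                  = ∑ m ∈ Finset.univ.erase l, E m := by
                rw [Finset.sum_erase_eq_sub (Finset.mem_univ l), hsumE]
              rw [hsub]
              exact psd_sum _ _ (fun m _ => hpos m)
            have hM : ((P l) ⊗ₖ ρa).PosSemidef := kron_psd (hPpsd l) hρa
            have htrF : (((1 : Matrix (s × a) (s × a) ℂ) - E l) * (P l ⊗ₖ ρa)).trace = 0 := by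
              rw [Matrix.sub_mul, Matrix.one_mul, Matrix.trace_sub, h2, hidem l,
                Matrix.trace_kronecker, hρatr, mul_one, sub_self]
            have h3 := mul_eq_zero_of_trace_mul_eq_zero hF hM htrF
            rw [Matrix.sub_mul, Matrix.one_mul, sub_eq_zero] at h3
            exact h3.symm
          · rw [if_neg hlk]
            have hP0 : (P l * P k).trace = 0 := by rw [horth l k hlk, Matrix.trace_zero]
            exact mul_eq_zero_of_trace_mul_eq_zero (hpos l) (kron_psd (hPpsd k) hρa)
              (by rw [h2, hP0])
      set W : G → κ → Matrix (s × a) (s × a) ℂ :=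
        fun g k => u g * ((P k) ⊗ₖ ρa) * (u g)ᴴ with hW
      have hWpsd : ∀ g k, (W g k).PosSemidef := fun g k =>
        (kron_psd (hPpsd k) hρa).mul_mul_conjTranspose_same (u g)
      have hEW : ∀ l g k, E l * W g k = if l = k then W g k else 0 := by
        intro l g k
        have hc := hcomm l g
        have e1 : E l * W g k = (E l * u g) * ((P k ⊗ₖ ρa) * (u g)ᴴ) := by
          simp only [hW]; noncomm_ring
        rw [e1, hc]
        have e2 : u g * E l * ((P k ⊗ₖ ρa) * (u g)ᴴ)
            = u g * (E l * (P k ⊗ₖ ρa)) * (u g)ᴴ := by noncomm_ring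
        rw [e2, key0 l k]
        split
        · simp only [hW]
        · rw [Matrix.mul_zero, Matrix.zero_mul]
      set T : κ → Matrix (s × a) (s × a) ℂ := fun k => ∑ g, W g k with hT
      have hTpsd : ∀ k, (T k).PosSemidef := fun k => psd_sum _ _ (fun g _ => hWpsd g k)
      have hET : ∀ l k, E l * T k = if l = k then T k else 0 := by
        intro l k
        simp only [hT, Finset.mul_sum, hEW]
        by_cases hlk : l = k <;> simp [hlk]
      choose Pr X hPrH hPrI hPrT hPrX using fun k => exists_range_proj (hTpsd k).isHermitian
      have hEPr : ∀ k, E k * Pr k = Pr k := by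
        intro k; rw [hPrX k, ← Matrix.mul_assoc, hET k k, if_pos rfl]
      have hEPr0 : ∀ l k, l ≠ k → E l * Pr k = 0 := by
        intro l k h; rw [hPrX k, ← Matrix.mul_assoc, hET l k, if_neg h, Matrix.zero_mul]
      have hPrE : ∀ k, Pr k * E k = Pr k := by
        intro k
        have h1 := congrArg Matrix.conjTranspose (hEPr k)
        rwa [Matrix.conjTranspose_mul, hEherm k, hPrH k] at h1
      have hPrE0 : ∀ l k, l ≠ k → Pr k * E l = 0 := by
        intro l k h
        have h1 := congrArg Matrix.conjTranspose (hEPr0 l k h)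
        rwa [Matrix.conjTranspose_mul, hEherm l, hPrH k, Matrix.conjTranspose_zero] at h1
      have hPrW : ∀ g k, Pr k * W g k = W g k := by
        intro g k
        have hGh : ((1 : Matrix (s × a) (s × a) ℂ) - Pr k)ᴴ = 1 - Pr k := by
          rw [Matrix.conjTranspose_sub, Matrix.conjTranspose_one, hPrH k]
        have hGT : ((1 : Matrix (s × a) (s × a) ℂ) - Pr k) * T k = 0 := by
          rw [Matrix.sub_mul, Matrix.one_mul, hPrT k, sub_self]
        have hsum0 : ∑ g' : G, ((1 : Matrix (s × a) (s × a) ℂ) - Pr k) * W g' k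
            * ((1 : Matrix (s × a) (s × a) ℂ) - Pr k)ᴴ = 0 := by
          rw [hGh]
          calc ∑ g' : G, (1 - Pr k) * W g' k * (1 - Pr k)
              = ((1 : Matrix (s × a) (s × a) ℂ) - Pr k) * T k * (1 - Pr k) := by
                simp only [hT, Finset.mul_sum, Finset.sum_mul]
            _ = 0 := by rw [hGT, Matrix.zero_mul]
        have hzero := psd_sum_eq_zero
          (fun g' => (hWpsd g' k).mul_mul_conjTranspose_same (1 - Pr k)) hsum0 g
        rw [hGh] at hzero
        have h1 := mul_psd_eq_zero (hWpsd g k) (by rw [hGh]; exact hzero)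
        rw [Matrix.sub_mul, Matrix.one_mul, sub_eq_zero] at h1
        exact h1.symm
      have hPrW0 : ∀ m g k, m ≠ k → Pr m * W g k = 0 := by
        intro m g k h
        calc Pr m * W g k = (Pr m * E m) * W g k := by rw [hPrE m]
          _ = Pr m * (E m * W g k) := by rw [Matrix.mul_assoc]
          _ = 0 := by rw [hEW m g k, if_neg h, Matrix.mul_zero]
      set Sg : Matrix (s × a) (s × a) ℂ := ∑ k, Pr k with hSg
      have hKorth : ∀ k l, k ≠ l → Pr k * Pr l = 0 := by
        intro k l h
        calc Pr k * Pr l = Pr k * (E l * Pr l) := by rw [hEPr l]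
          _ = (Pr k * E l) * Pr l := by rw [Matrix.mul_assoc]
          _ = 0 := by rw [hPrE0 l k (Ne.symm h), Matrix.zero_mul]
      have hSgPr : ∀ l, Sg * Pr l = Pr l := by
        intro l
        rw [hSg, Finset.sum_mul, Finset.sum_eq_single l
          (fun k _ hkl => hKorth k l hkl) (fun h => absurd (Finset.mem_univ l) h), hPrI l]
      have hPrSg : ∀ l, Pr l * Sg = Pr l := by
        intro l
        rw [hSg, Finset.mul_sum, Finset.sum_eq_single l
          (fun k _ hkl => hKorth l k (Ne.symm hkl)) (fun h => absurd (Finset.mem_univ l) h),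
          hPrI l]
      have hSgSg : Sg * Sg = Sg := by
        calc Sg * Sg = ∑ l, Sg * Pr l := by rw [hSg, Finset.mul_sum]
          _ = ∑ l, Pr l := Finset.sum_congr rfl fun l _ => hSgPr l
          _ = Sg := hSg.symm
      set R : Matrix (s × a) (s × a) ℂ := 1 - Sg with hR
      have hSgH : Sgᴴ = Sg := by
        rw [hSg, Matrix.conjTranspose_sum]
        exact Finset.sum_congr rfl fun k _ => hPrH k
      have hRH : Rᴴ = R := by
        rw [hR, Matrix.conjTranspose_sub, Matrix.conjTranspose_one, hSgH]
      have hRPr : ∀ l, R * Pr l = 0 := by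
        intro l; rw [hR, Matrix.sub_mul, Matrix.one_mul, hSgPr, sub_self]
      have hPrR : ∀ l, Pr l * R = 0 := by
        intro l; rw [hR, Matrix.mul_sub, Matrix.mul_one, hPrSg, sub_self]
      have hRR : R * R = R := by
        rw [hR]
        calc (1 - Sg) * (1 - Sg) = 1 - Sg - Sg + Sg * Sg := by noncomm_ring
          _ = 1 - Sg := by rw [hSgSg]; abel
      have hRW : ∀ g l, R * W g l = 0 := by
        intro g l
        rw [hR, Matrix.sub_mul, Matrix.one_mul, hSg, Finset.sum_mul]
        have h1 : ∑ k, Pr k * W g l = W g l := by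
          rw [Finset.sum_eq_single l (fun k _ hk => hPrW0 k g l hk)
            (fun h => absurd (Finset.mem_univ l) h)]
          exact hPrW g l
        rw [h1, sub_self]
      obtain ⟨k₀⟩ := hκ
      refine ⟨fun k => Pr k + (if k = k₀ then R else 0), ?_, ?_, ?_, ?_, ?_⟩
      · intro k
        show (Pr k + (if k = k₀ then R else 0))ᴴ = Pr k + (if k = k₀ then R else 0)
        rw [Matrix.conjTranspose_add, hPrH k]
        congr 1
        split
        · exact hRH
        · exact Matrix.conjTranspose_zero
      · intro k
        rw [Matrix.add_mul, Matrix.mul_add, Matrix.mul_add, hPrI k]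
        by_cases hk : k = k₀
        · simp [hk, hPrR, hRPr, hRR]
        · simp [hk]
      · intro k l hkl
        rw [Matrix.add_mul, Matrix.mul_add, Matrix.mul_add]
        have h1 : Pr k * Pr l = 0 := hKorth k l hkl
        by_cases hk : k = k₀ <;> by_cases hl : l = k₀
        · exact absurd (hk.trans hl.symm) hkl
        · subst hk; simp [hl, h1, hRPr]
        · subst hl; simp [hk, h1, hPrR]
        · simp [hk, hl, h1]
      · rw [Finset.sum_add_distrib]
        rw [Finset.sum_ite_eq' Finset.univ k₀ (fun _ => R), if_pos (Finset.mem_univ k₀),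
          ← hSg, hR]
        abel
      · intro g k ρs _ _
        have hQW : ∀ m g' l, (Pr m + (if m = k₀ then R else 0)) * W g' l
            = if m = l then W g' l else 0 := by
          intro m g' l
          rw [Matrix.add_mul]
          have h2 : (if m = k₀ then R else 0) * W g' l = 0 := by
            split
            · exact hRW g' l
            · rw [Matrix.zero_mul]
          rw [h2, add_zero]
          by_cases hml : m = l
          · subst hml; rw [if_pos rfl]; exact hPrW g' m
          · rw [if_neg hml]; exact hPrW0 m g' l hml
        set A : κ → Matrix s s ℂ :=
          fun l => (Us g : Matrix s s ℂ) * P l * (Us g : Matrix s s ℂ)ᴴ with hA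
        set σ : Matrix a a ℂ := (Ua g : Matrix a a ℂ) * ρa * (Ua g : Matrix a a ℂ)ᴴ with hσ
        have hA1 : ∑ l, A l = 1 := by
          calc ∑ l, A l = (∑ l, (Us g : Matrix s s ℂ) * P l) * (Us g : Matrix s s ℂ)ᴴ := by
                rw [← Finset.sum_mul]
            _ = ((Us g : Matrix s s ℂ) * ∑ l, P l) * (Us g : Matrix s s ℂ)ᴴ := by
                rw [← Finset.mul_sum]
            _ = 1 := by rw [hsum, Matrix.mul_one, hUs2 g]
        set Y : Matrix (s × a) (s × a) ℂ :=
          ((Us g : Matrix s s ℂ)ᴴ * ρs) ⊗ₖ ((Ua g : Matrix a a ℂ)ᴴ) with hY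
        have hC1 : ∀ l, (A l * ρs) ⊗ₖ σ = W g l * (u g * Y) := by
          intro l
          have e1 : W g l * (u g * Y) = u g * ((P l ⊗ₖ ρa) * Y) := by
            calc W g l * (u g * Y) = u g * (P l ⊗ₖ ρa) * ((u g)ᴴ * u g) * Y := by
                  simp only [hW]; noncomm_ring
              _ = u g * ((P l ⊗ₖ ρa) * Y) := by
                  rw [hu_inv g, Matrix.mul_one, Matrix.mul_assoc]
          have f1 : A l * ρs
              = (Us g : Matrix s s ℂ) * (P l * ((Us g : Matrix s s ℂ)ᴴ * ρs)) := by
            simp only [hA]; noncomm_ring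
          have f2 : σ = (Ua g : Matrix a a ℂ) * (ρa * (Ua g : Matrix a a ℂ)ᴴ) := by
            rw [hσ, Matrix.mul_assoc]
          rw [e1, hY]
          simp only [hu]
          rw [← Matrix.mul_kronecker_mul, ← Matrix.mul_kronecker_mul, ← f1, ← f2]
        have hQA : ∀ l, (Pr k + (if k = k₀ then R else 0)) * ((A l * ρs) ⊗ₖ σ)
            = if k = l then (A l * ρs) ⊗ₖ σ else 0 := by
          intro l
          rw [hC1 l, ← Matrix.mul_assoc, hQW k g l]
          split
          · rw [← hC1 l]
          · rw [Matrix.zero_mul]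
        have hdecomp : ρs ⊗ₖ σ = ∑ l, (A l * ρs) ⊗ₖ σ := by
          calc ρs ⊗ₖ σ = ((∑ l, A l) * ρs) ⊗ₖ σ := by rw [hA1, Matrix.one_mul]
            _ = (∑ l, A l * ρs) ⊗ₖ σ := by rw [Finset.sum_mul]
            _ = ∑ l, (A l * ρs) ⊗ₖ σ := sum_kron _ _ _
        have hσtr : σ.trace = 1 := by
          rw [hσ, Matrix.trace_mul_cycle, hUa1 g, Matrix.one_mul, hρatr]
        calc ((Pr k + (if k = k₀ then R else 0)) * (ρs ⊗ₖ σ)).trace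
            = ∑ l, ((Pr k + (if k = k₀ then R else 0)) * ((A l * ρs) ⊗ₖ σ)).trace := by
              rw [hdecomp, Finset.mul_sum, Matrix.trace_sum]
          _ = ∑ l, (if k = l then ((A l * ρs) ⊗ₖ σ).trace else 0) := by
              refine Finset.sum_congr rfl fun l _ => ?_
              rw [hQA l]
              split
              · rfl
              · rw [Matrix.trace_zero]
          _ = ((A k * ρs) ⊗ₖ σ).trace := by
              rw [Finset.sum_ite_eq Finset.univ k (fun l => ((A l * ρs) ⊗ₖ σ).trace),
                if_pos (Finset.mem_univ k)]
          _ = (A k * ρs).trace * σ.trace := Matrix.trace_kronecker _ _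
          _ = ((Us g : Matrix s s ℂ) * P k * (Us g : Matrix s s ℂ)ᴴ * ρs).trace := by
              rw [hσtr, mul_one, hA]
  · -- (ii) → (i)
    rintro ⟨Q, hQh, hQi, hQo, hQs, hQtr⟩
    set c : ℂ := ((Fintype.card G : ℂ))⁻¹ with hc
    have hcard : (Fintype.card G : ℂ) ≠ 0 := Nat.cast_ne_zero.mpr Fintype.card_ne_zero
    have hc0 : 0 ≤ c := by
      rw [hc]
      have h1 : ((Fintype.card G : ℕ) : ℂ) = (((Fintype.card G : ℕ) : ℝ) : ℂ) := by norm_cast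
      rw [h1, ← Complex.ofReal_inv]
      exact Complex.zero_le_real.mpr (by positivity)
    refine ⟨fun k => c • ∑ g, (u g)ᴴ * Q k * u g, ?_, ?_, ?_, ?_⟩
    · intro k
      refine psd_smul ?_ hc0
      refine psd_sum _ _ fun g _ => ?_
      have hQpsd : (Q k).PosSemidef := by
        have h1 : Q k = (Q k)ᴴ * Q k := by rw [hQh k, hQi k]
        rw [h1]; exact Matrix.posSemidef_conjTranspose_mul_self _
      exact hQpsd.conjTranspose_mul_mul_same (u g)
    · rw [← Finset.smul_sum]
      have h1 : (∑ k, ∑ g, (u g)ᴴ * Q k * u g) = ∑ _g : G, (1 : Matrix (s × a) (s × a) ℂ) := by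
        rw [Finset.sum_comm]
        refine Finset.sum_congr rfl fun g _ => ?_
        calc ∑ k, (u g)ᴴ * Q k * u g = (u g)ᴴ * (∑ k, Q k) * u g := by
              rw [Finset.mul_sum, Finset.sum_mul]
          _ = 1 := by rw [hQs, Matrix.mul_one, hu_inv g]
      rw [h1, Finset.sum_const, Finset.card_univ]
      have h2 : (Fintype.card G) • (1 : Matrix (s × a) (s × a) ℂ)
          = ((Fintype.card G : ℂ)) • (1 : Matrix (s × a) (s × a) ℂ) :=
        (Nat.cast_smul_eq_nsmul ℂ _ _).symm
      rw [h2, smul_smul, hc, inv_mul_cancel₀ hcard, one_smul]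
    · intro k h
      rw [Matrix.smul_mul, Matrix.mul_smul]
      congr 1
      rw [Finset.sum_mul, Finset.mul_sum]
      refine Fintype.sum_equiv (Equiv.mulRight h) _ _ fun g => ?_
      have e3 : u h * (u (g * h))ᴴ = (u g)ᴴ := by
        rw [hu_star, hu_star, hu_mul]
        congr 1
        group
      calc (u g)ᴴ * Q k * u g * u h = (u g)ᴴ * Q k * u (g * h) := by
            rw [Matrix.mul_assoc ((u g)ᴴ * Q k), hu_mul]
        _ = (u h * (u (g * h))ᴴ) * Q k * u (g * h) := by rw [e3]
        _ = u h * ((u (Equiv.mulRight h g))ᴴ * Q k * u (Equiv.mulRight h g)) := by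
            simp only [Equiv.coe_mulRight]
            noncomm_ring
    · intro k ρs hρs hρstr
      rw [Matrix.smul_mul, Matrix.trace_smul, smul_eq_mul]
      rw [Finset.sum_mul, Matrix.trace_sum]
      have hterm : ∀ g : G, (((u g)ᴴ * Q k * u g) * (ρs ⊗ₖ ρa)).trace = (P k * ρs).trace := by
        intro g
        have a1 : ((u g)ᴴ * Q k * u g) * (ρs ⊗ₖ ρa)
            = (u g)ᴴ * (Q k * u g * (ρs ⊗ₖ ρa)) := by noncomm_ring
        have a2 : Q k * u g * (ρs ⊗ₖ ρa) * (u g)ᴴ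
            = Q k * (u g * (ρs ⊗ₖ ρa) * (u g)ᴴ) := by noncomm_ring
        have e1 : (((u g)ᴴ * Q k * u g) * (ρs ⊗ₖ ρa)).trace
            = (Q k * (u g * (ρs ⊗ₖ ρa) * (u g)ᴴ)).trace := by
          rw [a1, Matrix.trace_mul_comm, a2]
        have e2 : u g * (ρs ⊗ₖ ρa) * (u g)ᴴ
            = ((Us g : Matrix s s ℂ) * ρs * (Us g : Matrix s s ℂ)ᴴ) ⊗ₖ
              ((Ua g : Matrix a a ℂ) * ρa * (Ua g : Matrix a a ℂ)ᴴ) := by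
          simp only [hu]
          rw [conjTranspose_kron, ← Matrix.mul_kronecker_mul, ← Matrix.mul_kronecker_mul]
        have hρs' : ((Us g : Matrix s s ℂ) * ρs * (Us g : Matrix s s ℂ)ᴴ).PosSemidef :=
          hρs.mul_mul_conjTranspose_same _
        have hρst' : ((Us g : Matrix s s ℂ) * ρs * (Us g : Matrix s s ℂ)ᴴ).trace = 1 := by
          rw [Matrix.trace_mul_cycle, hUs1 g, Matrix.one_mul, hρstr]
        have h3 := hQtr g k _ hρs' hρst'
        rw [e1, e2, h3]
        have e3 : (Us g : Matrix s s ℂ) * P k * (Us g : Matrix s s ℂ)ᴴ *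
              ((Us g : Matrix s s ℂ) * ρs * (Us g : Matrix s s ℂ)ᴴ)
            = (Us g : Matrix s s ℂ) * (P k * ρs) * (Us g : Matrix s s ℂ)ᴴ := by
          have e4 : (Us g : Matrix s s ℂ) * P k * (Us g : Matrix s s ℂ)ᴴ *
              ((Us g : Matrix s s ℂ) * ρs * (Us g : Matrix s s ℂ)ᴴ)
              = (Us g : Matrix s s ℂ) * P k *
                ((Us g : Matrix s s ℂ)ᴴ * (Us g : Matrix s s ℂ)) *
                (ρs * (Us g : Matrix s s ℂ)ᴴ) := by noncomm_ring
          rw [e4, hUs1 g, Matrix.mul_one]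
          noncomm_ring
        rw [e3, Matrix.trace_mul_cycle, hUs1 g, Matrix.one_mul]
      rw [Finset.sum_congr rfl (fun g _ => hterm g), Finset.sum_const, Finset.card_univ]
      rw [nsmul_eq_mul, ← mul_assoc, hc, inv_mul_cancel₀ hcard, one_mul]
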